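/- Let G be a locally compact group with left Haar measure μ, K ≤ G a compact open subgroup, and g ∈ G. Set L = K ∩ gKg⁻¹. Then p_K λ(g) p_K = (1/[K:L]) Σ_{kL ∈ K/L} λ(kg) p_K as operators on L²(G, μ). -/

import Mathlib

open MeasureTheory
open scoped ENNReal NNReal

/-- The averaging operator over a compact open subgroup `H`:
`(p_H ξ)(g) = (1/μ(H)) ∫_H ξ(kg) dμ(k)`. -/
noncomputable def avgProj {G : Type*} [Group G] [MeasurableSpace G]
    (μ : Measure G) (H : Subgroup G) (ξ : G → ℂ) : G → ℂ :=
  fun g => ((μ (H : Set G)).toReal)⁻¹ • ∫ k in (H : Set G), ξ (k * g) ∂μ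

/-- The left regular representation: `(λ(g)ξ)(h) = ξ(g⁻¹h)`. -/
def lreg {G : Type*} [Group G] (g : G) (ξ : G → ℂ) : G → ℂ :=
  fun h => ξ (g⁻¹ * h)

/-- The conjugate subgroup `gKg⁻¹`. -/
def conjSubgroup {G : Type*} [Group G] (g : G) (K : Subgroup G) : Subgroup G :=
  Subgroup.map ((MulAut.conj g).toMonoidHom) K

section Helpers

variable {G : Type*} [Group G] [TopologicalSpace G] [IsTopologicalGroup G]
    [LocallyCompactSpace G] [MeasurableSpace G] [BorelSpace G]
    (μ : Measure G) [μ.IsHaarMeasure]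

/-- Value of `μ` on a right translate of a set with compact closure. -/
lemma translate_smul_aux (y : G) {s : Set G} (hms : MeasurableSet s)
    (hcs : IsCompact (closure s)) :
    μ ((fun x => x * y) ⁻¹' s)
      = Measure.haarScalarFactor (Measure.map (· * y) μ) μ • μ s := by
  rw [← Measure.map_apply (measurable_mul_const y) hms]
  exact Measure.measure_isMulInvariant_eq_smul_of_isCompact_closure _ _ hcs

variable (K : Subgroup G)

/-- For `m ∈ K` (compact open), the scalar factor of the right translate is 1. -/
lemma scalar_one_aux (hKc : IsCompact (K : Set G)) (hKo : IsOpen (K : Set G))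
    {m : G} (hm : m ∈ K) :
    Measure.haarScalarFactor (Measure.map (· * m) μ) μ = 1 := by
  have hKcl : IsClosed (K : Set G) := K.isClosed_of_isOpen hKo
  have hpre : (fun x => x * m) ⁻¹' (K : Set G) = K := by
    ext x
    simp only [Set.mem_preimage, SetLike.mem_coe]
    exact ⟨fun h => by simpa using mul_mem h (inv_mem hm), fun h => mul_mem h hm⟩
  have h1 := translate_smul_aux μ m hKcl.measurableSet
    (by rw [hKcl.closure_eq]; exact hKc)
  rw [hpre] at h1
  have h0 : μ (K : Set G) ≠ 0 := (hKo.measure_pos μ ⟨1, K.one_mem⟩).ne'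
  have htop : μ (K : Set G) ≠ ∞ := hKc.measure_lt_top.ne
  have : (Measure.haarScalarFactor (Measure.map (· * m) μ) μ : ℝ≥0∞) * μ (K : Set G)
      = 1 * μ (K : Set G) := by
    rw [one_mul, ← smul_eq_mul, ← ENNReal.smul_def]; exact h1.symm
  have h2 := (ENNReal.mul_left_inj h0 htop).1 this
  exact_mod_cast h2

/-- The restriction of a Haar measure to a compact open subgroup is right invariant. -/
lemma map_restrict_aux (hKc : IsCompact (K : Set G)) (hKo : IsOpen (K : Set G))
    {m : G} (hm : m ∈ K) :
    Measure.map (· * m) (μ.restrict (K : Set G)) = μ.restrict (K : Set G) := by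
  have hKcl : IsClosed (K : Set G) := K.isClosed_of_isOpen hKo
  have hpre : (fun x => x * m) ⁻¹' (K : Set G) = K := by
    ext x
    simp only [Set.mem_preimage, SetLike.mem_coe]
    exact ⟨fun h => by simpa using mul_mem h (inv_mem hm), fun h => mul_mem h hm⟩
  ext s hs
  rw [Measure.map_apply (measurable_mul_const m) hs,
    Measure.restrict_apply (measurable_mul_const m hs),
    Measure.restrict_apply hs]
  have hI : (fun x => x * m) ⁻¹' s ∩ (K : Set G)
      = (fun x => x * m) ⁻¹' (s ∩ (K : Set G)) := by
    rw [Set.preimage_inter, hpre]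
  have hcc : IsCompact (closure (s ∩ (K : Set G))) :=
    hKc.of_isClosed_subset isClosed_closure
      (closure_minimal Set.inter_subset_right hKcl)
  rw [hI, translate_smul_aux μ m (hs.inter hKcl.measurableSet) hcc,
    scalar_one_aux μ K hKc hKo hm, one_smul]

lemma setIntegral_right_translate_aux (hKc : IsCompact (K : Set G))
    (hKo : IsOpen (K : Set G)) {m : G} (hm : m ∈ K) (f : G → ℂ)
    (hf : AEStronglyMeasurable f (μ.restrict (K : Set G))) :
    ∫ k in (K : Set G), f (k * m) ∂μ = ∫ k in (K : Set G), f k ∂μ := by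
  conv_rhs => rw [← map_restrict_aux μ K hKc hKo hm]
  rw [integral_map (measurable_mul_const m).aemeasurable]
  rw [map_restrict_aux μ K hKc hKo hm]; exact hf

lemma aesm_translate_aux (hKc : IsCompact (K : Set G)) (hKo : IsOpen (K : Set G))
    (y : G) {ξ : G → ℂ} (hξ : AEStronglyMeasurable ξ μ) :
    AEStronglyMeasurable (fun k => ξ (k * y)) (μ.restrict (K : Set G)) := by
  have hKcl : IsClosed (K : Set G) := K.isClosed_of_isOpen hKo
  obtain ⟨ξ', hξ'm, hξξ'⟩ := hξ
  refine ⟨fun k => ξ' (k * y), hξ'm.comp_measurable (measurable_mul_const y), ?_⟩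
  have hN : μ {x | ξ x ≠ ξ' x} = 0 := by
    simpa [Filter.EventuallyEq, ae_iff] using hξξ'
  set N := toMeasurable μ {x | ξ x ≠ ξ' x} with hNdef
  have hNm : MeasurableSet N := measurableSet_toMeasurable _ _
  have hNnull : μ N = 0 := by rw [hNdef, measure_toMeasurable]; exact hN
  have hKy : IsCompact ((fun x => x * y) '' (K : Set G)) :=
    hKc.image (continuous_mul_right y)
  have hKycl : IsClosed ((fun x => x * y) '' (K : Set G)) := by
    have : (fun x => x * y) '' (K : Set G) = (fun x => x * y⁻¹) ⁻¹' (K : Set G) := by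
      ext x
      simp only [Set.mem_image, Set.mem_preimage, SetLike.mem_coe]
      constructor
      · rintro ⟨k, hk, rfl⟩; simpa using hk
      · intro h; exact ⟨x * y⁻¹, h, by simp⟩
    rw [this]
    exact hKcl.preimage (continuous_mul_right y⁻¹)
  set A := ((fun x => x * y) '' (K : Set G)) ∩ N with hAdef
  have hAm : MeasurableSet A := hKycl.measurableSet.inter hNm
  have hAnull : μ A = 0 := measure_mono_null Set.inter_subset_right hNnull
  have hAcc : IsCompact (closure A) :=
    hKy.of_isClosed_subset isClosed_closure
      (closure_minimal Set.inter_subset_left hKycl)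
  have hApre : (fun x => x * y) ⁻¹' A = (K : Set G) ∩ ((fun x => x * y) ⁻¹' N) := by
    rw [hAdef, Set.preimage_inter,
      Set.preimage_image_eq (K : Set G) (fun a b hab => by simpa using mul_right_cancel hab)]
  have hpre0 : μ ((fun x => x * y) ⁻¹' A) = 0 := by
    rw [translate_smul_aux μ y hAm hAcc, hAnull, smul_zero]
  rw [Filter.EventuallyEq, ae_iff]
  refine le_antisymm ?_ zero_le
  have hsub : {k | ¬ ξ (k * y) = ξ' (k * y)} ⊆ (fun x => x * y) ⁻¹' N := fun k hk =>
    subset_toMeasurable μ _ hk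
  calc (μ.restrict (K : Set G)) {a | ¬ ξ (a * y) = ξ' (a * y)}
      ≤ (μ.restrict (K : Set G)) ((fun x => x * y) ⁻¹' N) := measure_mono hsub
    _ = μ (((fun x => x * y) ⁻¹' N) ∩ (K : Set G)) :=
        Measure.restrict_apply' hKcl.measurableSet
    _ = μ ((fun x => x * y) ⁻¹' A) := by rw [hApre, Set.inter_comm]
    _ ≤ 0 := le_of_eq hpre0

end Helpers

/-- With `L = K ∩ gKg⁻¹`, one has
`p_K λ(g) p_K = (1/[K:L]) Σ_{kL ∈ K/L} λ(kg) p_K` as operators on `L²(G)`. -/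
theorem avgProj_lreg_avgProj
    {G : Type*} [Group G] [TopologicalSpace G] [IsTopologicalGroup G]
    [LocallyCompactSpace G] [MeasurableSpace G] [BorelSpace G]
    (μ : Measure G) [μ.IsHaarMeasure]
    (K : Subgroup G) (hKc : IsCompact (K : Set G)) (hKo : IsOpen (K : Set G))
    (g : G)
    (T : Finset G) (hTK : (T : Set G) ⊆ K)
    (hreps : ∀ k ∈ K, ∃! t, t ∈ T ∧ t⁻¹ * k ∈ (K ⊓ conjSubgroup g K : Subgroup G))
    (ξ : G → ℂ) (hξ : MemLp ξ 2 μ) :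
    avgProj μ K (lreg g (avgProj μ K ξ)) =ᵐ[μ]
      fun h => (((K ⊓ conjSubgroup g K : Subgroup G).relIndex K : ℝ))⁻¹ •
        ∑ t ∈ T, lreg (t * g) (avgProj μ K ξ) h := by
  classical
  set L : Subgroup G := K ⊓ conjSubgroup g K with hLdef
  have hKcl : IsClosed (K : Set G) := K.isClosed_of_isOpen hKo
  -- conj subgroup set description
  have hconjset : (conjSubgroup g K : Set G) = (fun x => g⁻¹ * x * g) ⁻¹' (K : Set G) := by
    ext x
    simp only [conjSubgroup, Subgroup.coe_map, Set.mem_image, Set.mem_preimage,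
      SetLike.mem_coe, MulEquiv.coe_toMonoidHom, MulAut.conj_apply]
    constructor
    · rintro ⟨k, hk, rfl⟩; simpa [mul_assoc] using hk
    · intro h; exact ⟨g⁻¹ * x * g, h, by group⟩
  have hconjo : IsOpen (conjSubgroup g K : Set G) := by
    rw [hconjset]
    exact hKo.preimage ((continuous_mul_right g).comp (continuous_mul_left g⁻¹))
  have hconjcl : IsClosed (conjSubgroup g K : Set G) :=
    (conjSubgroup g K).isClosed_of_isOpen hconjo
  have hLset : (L : Set G) = (K : Set G) ∩ (conjSubgroup g K : Set G) := rfl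
  have hLo : IsOpen (L : Set G) := by rw [hLset]; exact hKo.inter hconjo
  have hLcl : IsClosed (L : Set G) := by rw [hLset]; exact hKcl.inter hconjcl
  have hLK : (L : Set G) ⊆ (K : Set G) := fun x hx => hx.1
  have hLc : IsCompact (L : Set G) := hKc.of_isClosed_subset hLcl hLK
  set η := avgProj μ K ξ with hηdef
  -- invariance of η under left multiplication by elements of K
  have hη_inv : ∀ m ∈ K, ∀ y, η (m * y) = η y := by
    intro m hm y
    have hf := aesm_translate_aux μ K hKc hKo y hξ.1
    have h1 := setIntegral_right_translate_aux μ K hKc hKo hm (fun k => ξ (k * y)) hf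
    simp only [hηdef, avgProj]
    congr 1
    calc ∫ k in (K : Set G), ξ (k * (m * y)) ∂μ
        = ∫ k in (K : Set G), ξ ((k * m) * y) ∂μ := by simp_rw [mul_assoc]
      _ = ∫ k in (K : Set G), ξ (k * y) ∂μ := h1
  -- the right cosets L t⁻¹
  set S : G → Set G := fun t => (fun x => x * t) ⁻¹' (L : Set G) with hSdef
  have hSm : ∀ t, MeasurableSet (S t) :=
    fun t => hLcl.measurableSet.preimage (measurable_mul_const t)
  have hSK : ∀ t ∈ T, S t ⊆ (K : Set G) := by
    intro t ht x hx
    have hxt : x * t ∈ K := hLK hx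
    have := mul_mem hxt (inv_mem (hTK ht))
    simpa using this
  have hmemS : ∀ t (k : G), k ∈ S t ↔ t⁻¹ * k⁻¹ ∈ L := by
    intro t k
    simp only [hSdef, Set.mem_preimage, SetLike.mem_coe]
    constructor
    · intro h; simpa [mul_inv_rev] using inv_mem h
    · intro h; simpa [mul_inv_rev] using inv_mem h
  -- uniqueness of the coset containing k
  have hunique : ∀ k ∈ K, ∃! t, t ∈ T ∧ k ∈ S t := by
    intro k hk
    obtain ⟨t₀, ht₀, huniq⟩ := hreps k⁻¹ (inv_mem hk)
    refine ⟨t₀, ⟨ht₀.1, (hmemS t₀ k).2 ht₀.2⟩, ?_⟩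
    intro t ht
    exact huniq t ⟨ht.1, (hmemS t k).1 ht.2⟩
  -- μ (S t) = μ L for t ∈ T
  have hμS : ∀ t ∈ T, μ (S t) = μ (L : Set G) := by
    intro t ht
    have := translate_smul_aux μ t hLcl.measurableSet
      (by rw [hLcl.closure_eq]; exact hLc)
    rw [this, scalar_one_aux μ K hKc hKo (hTK ht), one_smul]
  -- μ K = card T • μ L
  have hcover : (K : Set G) = ⋃ t ∈ T, S t := by
    apply Set.Subset.antisymm
    · intro k hk
      obtain ⟨t₀, ⟨ht₀T, ht₀S⟩, _⟩ := hunique k hk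
      exact Set.mem_biUnion ht₀T ht₀S
    · intro k hk
      obtain ⟨t, ht, hkt⟩ := Set.mem_iUnion₂.1 hk
      exact hSK t ht hkt
  have hdisj : (T : Set G).PairwiseDisjoint S := by
    intro t₁ ht₁ t₂ ht₂ hne
    rw [Function.onFun, Set.disjoint_left]
    intro k hk1 hk2
    have hkK : k ∈ K := hSK t₁ ht₁ hk1
    obtain ⟨t₀, _, huniq⟩ := hunique k hkK
    exact hne ((huniq t₁ ⟨ht₁, hk1⟩).trans (huniq t₂ ⟨ht₂, hk2⟩).symm)
  have hμK : μ (K : Set G) = T.card • μ (L : Set G) := by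
    rw [hcover, measure_biUnion_finset hdisj (fun t _ => hSm t)]
    rw [Finset.sum_congr rfl hμS, Finset.sum_const]
  -- T.card = relIndex
  have hcard : T.card = L.relIndex K := by
    have hbij : Function.Bijective
        (fun t : {x // x ∈ T} => QuotientGroup.mk (s := L.subgroupOf K)
          (⟨(t : G), hTK t.2⟩ : K)) := by
      constructor
      · intro t₁ t₂ h
        rw [QuotientGroup.eq] at h
        rw [Subgroup.mem_subgroupOf] at h
        have h' : (t₁ : G)⁻¹ * (t₂ : G) ∈ L := h
        obtain ⟨t₀, _, huniq⟩ := hreps (t₂ : G) (hTK t₂.2)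
        have e1 : (t₁ : G) = t₀ := huniq _ ⟨t₁.2, h'⟩
        have e2 : (t₂ : G) = t₀ := huniq _ ⟨t₂.2, by simpa using L.one_mem⟩
        exact Subtype.ext (e1.trans e2.symm)
      · intro q
        induction q using QuotientGroup.induction_on with
        | H k =>
          obtain ⟨t₀, ⟨ht₀T, ht₀L⟩, _⟩ := hreps (k : G) k.2
          refine ⟨⟨t₀, ht₀T⟩, ?_⟩
          rw [QuotientGroup.eq, Subgroup.mem_subgroupOf]
          exact ht₀L
    have := Nat.card_eq_of_bijective _ hbij
    rw [Nat.card_eq_finsetCard] at this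
    rw [Subgroup.relIndex, Subgroup.index, ← this]
  -- positivity facts
  have hμL0 : μ (L : Set G) ≠ 0 := (hLo.measure_pos μ ⟨1, L.one_mem⟩).ne'
  have hμLtop : μ (L : Set G) ≠ ∞ := hLc.measure_lt_top.ne
  have hcL : (μ (L : Set G)).toReal ≠ 0 := by
    simp [ENNReal.toReal_ne_zero, hμL0, hμLtop]
  have hT0 : T.card ≠ 0 := by
    intro h
    apply hμL0
    have h0 : μ (K : Set G) ≠ 0 := (hKo.measure_pos μ ⟨1, K.one_mem⟩).ne'
    rw [hμK, h, zero_smul] at h0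
    exact absurd rfl h0
  -- pointwise equality
  apply Filter.Eventually.of_forall
  intro h
  have key : ∫ k in (K : Set G), η (g⁻¹ * (k * h)) ∂μ
      = ∑ t ∈ T, (μ (L : Set G)).toReal • η (g⁻¹ * (t⁻¹ * h)) := by
    have hindic : (K : Set G).indicator (fun k => η (g⁻¹ * (k * h)))
        = fun k => ∑ t ∈ T, (S t).indicator (fun _ => η (g⁻¹ * (t⁻¹ * h))) k := by
      funext k
      by_cases hk : k ∈ (K : Set G)
      · rw [Set.indicator_of_mem hk]
        obtain ⟨t₀, ⟨ht₀T, ht₀S⟩, huniq⟩ := hunique k hk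
        rw [Finset.sum_eq_single_of_mem t₀ ht₀T]
        · rw [Set.indicator_of_mem ht₀S]
          -- η (g⁻¹ * (k * h)) = η (g⁻¹ * (t₀⁻¹ * h))
          have hl : k * t₀ ∈ L := by
            have := (hmemS t₀ k).1 ht₀S
            simpa [mul_inv_rev] using inv_mem this
          have hl2 : k * t₀ ∈ ((conjSubgroup g K : Subgroup G) : Set G) := hl.2
          rw [hconjset] at hl2
          have hm : g⁻¹ * (k * t₀) * g ∈ K := hl2
          have heq : g⁻¹ * (k * h) = (g⁻¹ * (k * t₀) * g) * (g⁻¹ * (t₀⁻¹ * h)) := by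
            group
          rw [heq, hη_inv _ hm]
        · intro t htT htne
          rw [Set.indicator_of_notMem]
          intro hkt
          exact htne (huniq t ⟨htT, hkt⟩)
      · rw [Set.indicator_of_notMem hk]
        symm
        apply Finset.sum_eq_zero
        intro t ht
        rw [Set.indicator_of_notMem]
        exact fun hkt => hk (hSK t ht hkt)
    rw [← integral_indicator hKcl.measurableSet, hindic]
    rw [integral_finset_sum]
    · apply Finset.sum_congr rfl
      intro t ht
      rw [integral_indicator_const _ (hSm t), Measure.real, hμS t ht]
    · intro t ht
      rw [integrable_indicator_iff (hSm t)]
      apply (integrableOn_const_iff (by simp)).2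
      right
      exact lt_of_le_of_lt (measure_mono (hSK t ht)) hKc.measure_lt_top
  -- assemble
  simp only [avgProj, lreg]
  rw [key, ← Finset.smul_sum, smul_smul]
  have hscal : ((μ (K : Set G)).toReal)⁻¹ * (μ (L : Set G)).toReal
      = ((L.relIndex K : ℝ))⁻¹ := by
    rw [← hcard, hμK, nsmul_eq_mul, ENNReal.toReal_mul, ENNReal.toReal_natCast,
      mul_inv, mul_assoc, inv_mul_cancel₀ hcL, mul_one]
  rw [hscal]
  congr 1
  apply Finset.sum_congr rfl
  intro t _
  show η (g⁻¹ * (t⁻¹ * h)) = η ((t * g)⁻¹ * h)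
  congr 1
  group
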